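/- arXiv:1308.2358 — 2 statements merged into one kernel-verified Lean document; each statement's English description precedes it below -/
import Mathlib

section
/- For all positive integers n, b and every integer ℓ with 0 ≤ ℓ < n, one has c_{n,b}(ℓ) ≤ c_{n,b}(ℓ+1); that is, the initial segment c_{n,b}(0) ≤ c_{n,b}(1) ≤ ... ≤ c_{n,b}(n) is weakly increasing. -/
/-- `c n b ℓ` is the number of partitions of `ℓ` into at most `b` distinct parts,
each part of size at most `n`, encoded as finsets of `{1, …, n}` of cardinality
at most `b` with sum `ℓ`. -/
def truncStaircaseCount (n b ℓ : ℕ) : ℕ :=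
  (((Finset.Icc 1 n).powerset).filter (fun s => s.card ≤ b ∧ s.sum id = ℓ)).card

/-- For `0 ≤ ℓ < n`, `c_{n,b}(ℓ) ≤ c_{n,b}(ℓ+1)`: the initial segment is weakly increasing. -/
theorem initial_segment_increasing (n b ℓ : ℕ) (hn : 0 < n) (hb : 0 < b) (hℓ : ℓ < n) :
    truncStaircaseCount n b ℓ ≤ truncStaircaseCount n b (ℓ + 1) := by
  classical
  unfold truncStaircaseCount
  apply Finset.card_le_card_of_injOn
    (fun s => if h : s.Nonempty then insert (s.max' h + 1) (s.erase (s.max' h)) else {1})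
  · intro s hs
    simp only [Finset.mem_coe, Finset.mem_filter, Finset.mem_powerset] at hs ⊢
    obtain ⟨hsub, hcard, hsum⟩ := hs
    by_cases h : s.Nonempty
    · simp only [dif_pos h]
      set m := s.max' h with hm
      have hmem : m ∈ s := s.max'_mem h
      have hmle : m ≤ ℓ := by
        rw [← hsum]
        exact Finset.single_le_sum (f := id) (fun i _ => Nat.zero_le i) hmem
      have hnot : m + 1 ∉ s.erase m := by
        intro hc
        have := Finset.le_max' s (m + 1) (Finset.mem_of_mem_erase hc)
        omega
      refine ⟨?_, ?_, ?_⟩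
      · intro x hx
        rcases Finset.mem_insert.mp hx with rfl | hx
        · simp only [Finset.mem_Icc]; omega
        · exact hsub (Finset.mem_of_mem_erase hx)
      · rw [Finset.card_insert_of_notMem hnot, Finset.card_erase_of_mem hmem]
        have := Finset.card_pos.mpr h
        omega
      · rw [Finset.sum_insert hnot]
        have h2 : (s.erase m).sum id + m = ℓ := by
          rw [← hsum]; exact Finset.sum_erase_add s id hmem
        simp only [id_eq] at h2 ⊢
        omega
    · simp only [dif_neg h]
      rw [Finset.not_nonempty_iff_eq_empty] at h
      subst h
      simp only [Finset.sum_empty] at hsum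
      refine ⟨?_, ?_, ?_⟩
      · simp only [Finset.singleton_subset_iff, Finset.mem_Icc]; omega
      · simpa [Nat.one_le_iff_ne_zero, Nat.pos_iff_ne_zero] using hb
      · simp [← hsum]
  · intro s1 hs1 s2 hs2 hf
    simp only [Finset.coe_filter, Set.mem_setOf_eq, Finset.mem_powerset] at hs1 hs2
    obtain ⟨hsub1, -, -⟩ := hs1
    obtain ⟨hsub2, -, -⟩ := hs2
    simp only at hf
    by_cases h1 : s1.Nonempty <;> by_cases h2 : s2.Nonempty
    · rw [dif_pos h1, dif_pos h2] at hf
      set m1 := s1.max' h1 with hm1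
      set m2 := s2.max' h2 with hm2
      have hmem1 : m1 ∈ s1 := s1.max'_mem h1
      have hmem2 : m2 ∈ s2 := s2.max'_mem h2
      have hnot1 : m1 + 1 ∉ s1.erase m1 := by
        intro hc
        have := Finset.le_max' s1 (m1 + 1) (Finset.mem_of_mem_erase hc)
        omega
      have hnot2 : m2 + 1 ∉ s2.erase m2 := by
        intro hc
        have := Finset.le_max' s2 (m2 + 1) (Finset.mem_of_mem_erase hc)
        omega
      have heq : m1 = m2 := by
        have ha : m1 + 1 ∈ insert (m2 + 1) (s2.erase m2) := by
          rw [← hf]; exact Finset.mem_insert_self _ _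
        have hb' : m2 + 1 ∈ insert (m1 + 1) (s1.erase m1) := by
          rw [hf]; exact Finset.mem_insert_self _ _
        rcases Finset.mem_insert.mp ha with h | h
        · omega
        · have ha2 : m1 + 1 ≤ m2 := Finset.le_max' s2 _ (Finset.mem_of_mem_erase h)
          rcases Finset.mem_insert.mp hb' with h' | h'
          · omega
          · have := Finset.le_max' s1 _ (Finset.mem_of_mem_erase h')
            omega
      clear_value m1 m2
      subst heq
      have herase : s1.erase m1 = s2.erase m1 := by
        have := congrArg (fun t => Finset.erase t (m1 + 1)) hf
        simpa [Finset.erase_insert hnot1, Finset.erase_insert hnot2] using this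
      calc s1 = insert m1 (s1.erase m1) := (Finset.insert_erase hmem1).symm
        _ = insert m1 (s2.erase m1) := by rw [herase]
        _ = s2 := Finset.insert_erase hmem2
    · rw [dif_pos h1, dif_neg h2] at hf
      exfalso
      have : s1.max' h1 + 1 ∈ ({1} : Finset ℕ) := by
        rw [← hf]; exact Finset.mem_insert_self _ _
      have h1' : 1 ≤ s1.max' h1 := (Finset.mem_Icc.mp (hsub1 (s1.max'_mem h1))).1
      simp only [Finset.mem_singleton] at this
      omega
    · rw [dif_neg h1, dif_pos h2] at hf
      exfalso
      have : s2.max' h2 + 1 ∈ ({1} : Finset ℕ) := by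
        rw [hf]; exact Finset.mem_insert_self _ _
      have h2' : 1 ≤ s2.max' h2 := (Finset.mem_Icc.mp (hsub2 (s2.max'_mem h2))).1
      simp only [Finset.mem_singleton] at this
      omega
    · rw [Finset.not_nonempty_iff_eq_empty] at h1 h2
      rw [h1, h2]
end

section
/- For all positive integers n, b with n ≥ b and every integer ℓ with (b−1)n < ℓ ≤ bn − b(b−1)/2, one has c_{n,b}(ℓ−1) ≥ c_{n,b}(ℓ); that is, the final segment c_{n,b}((b−1)n) ≥ c_{n,b}((b−1)n + 1) ≥ ... ≥ c_{n,b}(bn − b(b−1)/2) is weakly decreasing. -/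
/-- For `n ≥ b ≥ 1` and `(b−1)n < ℓ ≤ bn − b(b−1)/2`, one has
`c_{n,b}(ℓ−1) ≥ c_{n,b}(ℓ)`: the final segment is weakly decreasing. -/
theorem final_segment_decreasing (n b ℓ : ℕ) (hb : 0 < b) (hnb : b ≤ n)
    (h₁ : (b - 1) * n < ℓ) (h₂ : ℓ ≤ b * n - b * (b - 1) / 2) :
    truncStaircaseCount n b ℓ ≤ truncStaircaseCount n b (ℓ - 1) := by
  classical
  unfold truncStaircaseCount
  set A := (((Finset.Icc 1 n).powerset).filter (fun s => s.card ≤ b ∧ s.sum id = ℓ)) with hA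
  set B := (((Finset.Icc 1 n).powerset).filter (fun s => s.card ≤ b ∧ s.sum id = ℓ - 1)) with hB
  -- the injection
  let f : Finset ℕ → Finset ℕ := fun s =>
    if 1 ∈ s then s.erase 1
    else if h : s.Nonempty then insert (s.min' h - 1) (s.erase (s.min' h)) else ∅
  -- basic facts about members of A
  have hℓpos : 0 < ℓ := lt_of_le_of_lt (Nat.zero_le _) h₁
  have memA : ∀ s ∈ A, s ⊆ Finset.Icc 1 n ∧ s.card = b ∧ s.sum id = ℓ := by
    intro s hs
    rw [hA, Finset.mem_filter, Finset.mem_powerset] at hs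
    obtain ⟨hsub, hcard, hsum⟩ := hs
    refine ⟨hsub, ?_, hsum⟩
    by_contra hne
    have hlt : s.card ≤ b - 1 := by omega
    have hle : s.sum id ≤ s.card * n := by
      have := Finset.sum_le_card_nsmul s id n (fun x hx => (Finset.mem_Icc.mp (hsub hx)).2)
      simpa [smul_eq_mul] using this
    have : s.sum id ≤ (b - 1) * n := le_trans hle (Nat.mul_le_mul_right n hlt)
    omega
  have hne : ∀ s ∈ A, s.Nonempty := by
    intro s hs
    obtain ⟨_, _, hsum⟩ := memA s hs
    rcases Finset.eq_empty_or_nonempty s with rfl | h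
    · simp at hsum; omega
    · exact h
  -- f maps A into B
  have hmaps : ∀ s ∈ A, f s ∈ B := by
    intro s hs
    obtain ⟨hsub, hcard, hsum⟩ := memA s hs
    by_cases h1 : 1 ∈ s
    · have hfs : f s = s.erase 1 := if_pos h1
      rw [hB, hfs, Finset.mem_filter, Finset.mem_powerset]
      have hsum' : (s.erase 1).sum id + 1 = ℓ := by
        have h := Finset.sum_erase_add s id h1
        rw [hsum] at h
        simpa using h
      refine ⟨(Finset.erase_subset _ _).trans hsub, ?_, by omega⟩
      calc (s.erase 1).card ≤ s.card := Finset.card_erase_le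
        _ ≤ b := le_of_eq hcard
    · have hns := hne s hs
      set m := s.min' hns with hm
      have hmmem : m ∈ s := s.min'_mem hns
      have hmIcc : m ∈ Finset.Icc 1 n := hsub hmmem
      have hm1 : 1 ≤ m := (Finset.mem_Icc.mp hmIcc).1
      have hmn : m ≤ n := (Finset.mem_Icc.mp hmIcc).2
      have hm2 : 2 ≤ m := by
        rcases Nat.lt_or_ge m 2 with h | h
        · interval_cases m
          · exact absurd hmmem h1
        · exact h
      have hfs : f s = insert (m - 1) (s.erase m) := by
        simp only [f, if_neg h1, dif_pos hns]; rfl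
      have hnotmem : m - 1 ∉ s.erase m := by
        intro hmem
        have := s.min'_le _ (Finset.mem_of_mem_erase hmem)
        omega
      have hsum' : (s.erase m).sum id + m = ℓ := by
        have h := Finset.sum_erase_add s id hmmem
        rw [hsum] at h
        simpa using h
      rw [hB, hfs, Finset.mem_filter, Finset.mem_powerset]
      refine ⟨?_, ?_, ?_⟩
      · intro x hx
        rcases Finset.mem_insert.mp hx with rfl | hx
        · exact Finset.mem_Icc.mpr ⟨by omega, by omega⟩
        · exact hsub (Finset.mem_of_mem_erase hx)
      · rw [Finset.card_insert_of_notMem hnotmem, Finset.card_erase_of_mem hmmem]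
        omega
      · rw [Finset.sum_insert hnotmem]
        simp only [id_eq] at hsum' ⊢
        omega
  -- f is injective on A
  have hinj : Set.InjOn f A := by
    intro s hs t ht heq
    obtain ⟨hsubS, hcardS, hsumS⟩ := memA s hs
    obtain ⟨hsubT, hcardT, hsumT⟩ := memA t ht
    have hnsS := hne s hs
    have hnsT := hne t ht
    -- cardinalities of images in the two cases differ
    by_cases h1s : 1 ∈ s <;> by_cases h1t : 1 ∈ t
    · -- both erase 1
      have e1 : s.erase 1 = t.erase 1 := by
        simpa [f, h1s, h1t] using heq
      have : insert 1 (s.erase 1) = insert 1 (t.erase 1) := by rw [e1]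
      rwa [Finset.insert_erase h1s, Finset.insert_erase h1t] at this
    · -- card contradiction
      exfalso
      set m := t.min' hnsT with hm
      have hmmem : m ∈ t := t.min'_mem hnsT
      have hnotmem : m - 1 ∉ t.erase m := by
        intro hmem
        have h2 : 2 ≤ m := by
          have h1 : 1 ≤ m := (Finset.mem_Icc.mp (hsubT hmmem)).1
          rcases Nat.lt_or_ge m 2 with h | h
          · interval_cases m
            · exact absurd hmmem h1t
          · exact h
        have := t.min'_le _ (Finset.mem_of_mem_erase hmem)
        omega
      have hcf : (f s).card = b - 1 := by
        simp only [f, if_pos h1s]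
        rw [Finset.card_erase_of_mem h1s]; omega
      have hcf' : (f t).card = b := by
        simp only [f, if_neg h1t, dif_pos hnsT]
        rw [Finset.card_insert_of_notMem hnotmem, Finset.card_erase_of_mem hmmem]
        omega
      rw [heq, hcf'] at hcf
      omega
    · -- symmetric card contradiction
      exfalso
      set m := s.min' hnsS with hm
      have hmmem : m ∈ s := s.min'_mem hnsS
      have hnotmem : m - 1 ∉ s.erase m := by
        intro hmem
        have h2 : 2 ≤ m := by
          have h1 : 1 ≤ m := (Finset.mem_Icc.mp (hsubS hmmem)).1
          rcases Nat.lt_or_ge m 2 with h | h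
          · interval_cases m
            · exact absurd hmmem h1s
          · exact h
        have := s.min'_le _ (Finset.mem_of_mem_erase hmem)
        omega
      have hcf : (f s).card = b := by
        simp only [f, if_neg h1s, dif_pos hnsS]
        rw [Finset.card_insert_of_notMem hnotmem, Finset.card_erase_of_mem hmmem]
        omega
      have hcf' : (f t).card = b - 1 := by
        simp only [f, if_pos h1t]
        rw [Finset.card_erase_of_mem h1t]; omega
      rw [heq, hcf'] at hcf
      omega
    · -- both decrement their minimum
      set ms := s.min' hnsS with hms
      set mt := t.min' hnsT with hmt
      have hmsmem : ms ∈ s := s.min'_mem hnsS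
      have hmtmem : mt ∈ t := t.min'_mem hnsT
      have hms2 : 2 ≤ ms := by
        have h1 : 1 ≤ ms := (Finset.mem_Icc.mp (hsubS hmsmem)).1
        rcases Nat.lt_or_ge ms 2 with h | h
        · interval_cases ms
          · exact absurd hmsmem h1s
        · exact h
      have hmt2 : 2 ≤ mt := by
        have h1 : 1 ≤ mt := (Finset.mem_Icc.mp (hsubT hmtmem)).1
        rcases Nat.lt_or_ge mt 2 with h | h
        · interval_cases mt
          · exact absurd hmtmem h1t
        · exact h
      have hnotS : ms - 1 ∉ s.erase ms := by
        intro hmem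
        have := s.min'_le _ (Finset.mem_of_mem_erase hmem)
        omega
      have hnotT : mt - 1 ∉ t.erase mt := by
        intro hmem
        have := t.min'_le _ (Finset.mem_of_mem_erase hmem)
        omega
      have heq' : insert (ms - 1) (s.erase ms) = insert (mt - 1) (t.erase mt) := by
        simpa [f, h1s, h1t, hnsS, hnsT] using heq
      -- show ms = mt
      have hmm : ms = mt := by
        have h₁ : ms - 1 ∈ insert (mt - 1) (t.erase mt) := by
          rw [← heq']; exact Finset.mem_insert_self _ _
        have h₂ : mt - 1 ∈ insert (ms - 1) (s.erase ms) := by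
          rw [heq']; exact Finset.mem_insert_self _ _
        rcases Finset.mem_insert.mp h₁ with h | h
        · omega
        · have hle := t.min'_le _ (Finset.mem_of_mem_erase h)
          rcases Finset.mem_insert.mp h₂ with h' | h'
          · omega
          · have hle' := s.min'_le _ (Finset.mem_of_mem_erase h')
            omega
      clear_value ms mt
      subst hmm
      have e2 : s.erase ms = t.erase ms := by
        have := congrArg (fun u => u.erase (ms - 1)) heq'
        simpa [Finset.erase_insert hnotS, Finset.erase_insert hnotT] using this
      have : insert ms (s.erase ms) = insert ms (t.erase ms) := by rw [e2]
      rwa [Finset.insert_erase hmsmem, Finset.insert_erase hmtmem] at this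
  exact Finset.card_le_card_of_injOn f hmaps hinj
end
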